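/- Feasibility of the adjusted curtailment (key step of Theorem 2): suppose 0 ≤ P_curt ≤ P_res, η_ch·η_dch < 1, and (P_res − P_curt)/(1 − η_ch·η_dch) ≥ min(P_ch, P_dch/(η_ch·η_dch)). Then the adjusted curtailment P̃_curt := P_curt + ΔP, where ΔP = (P̃_dch − P̃_ch) − (P_dch − P_ch) is the change in net discharge under the EEC transform, satisfies 0 ≤ P̃_curt ≤ P_res. -/

import Mathlib

/-- Feasibility of the adjusted curtailment (key step of Theorem 2). -/
theorem eec_adjusted_curtailment_feasible
    (Pres Pcurt Pch Pdch ηch ηdch ΔT : ℝ)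
    (hPres : 0 ≤ Pres)
    (hPcurt : 0 ≤ Pcurt) (hPcurtUB : Pcurt ≤ Pres)
    (hPch : 0 ≤ Pch) (hPdch : 0 ≤ Pdch)
    (hηch : ηch ∈ Set.Ioo (0:ℝ) 1) (hηdch : ηdch ∈ Set.Ioo (0:ℝ) 1)
    (hloss : ηch * ηdch < 1)
    (hΔT : 0 < ΔT)
    (hcond : (Pres - Pcurt) / (1 - ηch * ηdch) ≥
      min Pch (Pdch / (ηch * ηdch))) :
    let ΔE := ΔT * (Pch * ηch - Pdch / ηdch)
    let Pch' := if 0 ≤ ΔE then ΔE / (ηch * ΔT) else 0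
    let Pdch' := if 0 ≤ ΔE then 0 else -ΔE * ηdch / ΔT
    let ΔP := (Pdch' - Pch') - (Pdch - Pch)
    let Pcurt' := Pcurt + ΔP
    0 ≤ Pcurt' ∧ Pcurt' ≤ Pres := by
  obtain ⟨hc0, hc1⟩ := hηch
  obtain ⟨hd0, hd1⟩ := hηdch
  have hk0 : 0 < ηch * ηdch := mul_pos hc0 hd0
  have h1k : 0 < 1 - ηch * ηdch := by linarith
  intro ΔE Pch' Pdch' ΔP Pcurt'
  by_cases hE : 0 ≤ ΔE
  · -- ΔE ≥ 0 : Pch ηch ≥ Pdch/ηdch, so Pch ≥ Pdch/(ηch ηdch)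
    have hineq : Pdch / (ηch * ηdch) ≤ Pch := by
      have h : Pdch / ηdch ≤ Pch * ηch := by
        have := (mul_nonneg_iff_of_pos_left hΔT).mp hE
        linarith
      rw [div_le_iff₀ hk0]
      calc Pdch = (Pdch / ηdch) * ηdch := by field_simp
        _ ≤ (Pch * ηch) * ηdch := by
            exact mul_le_mul_of_nonneg_right h hd0.le
        _ = Pch * (ηch * ηdch) := by ring
    have hmin : min Pch (Pdch / (ηch * ηdch)) = Pdch / (ηch * ηdch) :=
      min_eq_right hineq
    rw [hmin] at hcond
    have hub : Pdch / (ηch * ηdch) * (1 - ηch * ηdch) ≤ Pres - Pcurt := by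
      rw [ge_iff_le, le_div_iff₀ h1k] at hcond
      linarith
    have hΔP : ΔP = Pdch / (ηch * ηdch) - Pdch := by
      show (Pdch' - Pch') - (Pdch - Pch) = _
      simp only [Pch', Pdch', if_pos hE, ΔE]
      field_simp
      ring
    constructor
    · show 0 ≤ Pcurt + ΔP
      rw [hΔP]
      have : Pdch ≤ Pdch / (ηch * ηdch) := by
        rw [le_div_iff₀ hk0]
        nlinarith
      linarith
    · show Pcurt + ΔP ≤ Pres
      rw [hΔP]
      have : Pdch / (ηch * ηdch) * (1 - ηch * ηdch)
          = Pdch / (ηch * ηdch) - Pdch := by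
        field_simp
      linarith
  · -- ΔE < 0
    push_neg at hE
    have hE' : Pch * ηch < Pdch / ηdch := by
      by_contra h
      push_neg at h
      have : 0 ≤ ΔE := mul_nonneg hΔT.le (by linarith)
      linarith
    have hineq : Pch ≤ Pdch / (ηch * ηdch) := by
      rw [le_div_iff₀ hk0]
      have : Pch * ηch * ηdch < Pdch / ηdch * ηdch :=
        mul_lt_mul_of_pos_right hE' hd0
      have h2 : Pdch / ηdch * ηdch = Pdch := by field_simp
      nlinarith
    have hmin : min Pch (Pdch / (ηch * ηdch)) = Pch := min_eq_left hineq
    rw [hmin] at hcond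
    have hub : Pch * (1 - ηch * ηdch) ≤ Pres - Pcurt := by
      rw [ge_iff_le, le_div_iff₀ h1k] at hcond
      linarith
    have hΔP : ΔP = Pch * (1 - ηch * ηdch) := by
      show (Pdch' - Pch') - (Pdch - Pch) = _
      simp only [Pch', Pdch', if_neg (not_le.mpr hE), ΔE]
      field_simp
      ring
    refine ⟨?_, ?_⟩
    · show 0 ≤ Pcurt + ΔP
      rw [hΔP]
      nlinarith
    · show Pcurt + ΔP ≤ Pres
      rw [hΔP]
      linarith
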